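/- arXiv:1303.7170 — 5 statements merged into one kernel-verified Lean document; each statement's English description precedes it below -/
import Mathlib

section
/- For any Riemannian metric g and symmetric 2-tensor h on a manifold of dimension n ≥ 4 (pointwise, at a fixed point), one has |h|²|Rc|² − (2R/(n−2))(H·R_{ij}h_{ij} − R_{jk}h_{ji}h_{ik}) + R²(H² − |h|²)/((n−1)(n−2)) ≥ 0, where H = g^{ij}h_{ij}, R is the scalar curvature, and all norms and traces are taken with respect to g. -/
open Finset

/-- Cauchy–Schwarz per pair plus summation: for `x` summing to `0`,
`n(n-1) Σ x⁴ ≤ (n²-3n+3) (Σ x²)²`. -/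
theorem aux_lemmaV (n : ℕ) (hn : 3 ≤ n) (x : Fin n → ℝ) (hx : ∑ i, x i = 0) :
    (n:ℝ) * ((n:ℝ)-1) * (∑ i, (x i)^4) ≤ ((n:ℝ)^2 - 3*(n:ℝ) + 3) * (∑ i, (x i)^2)^2 := by
  set p2 : ℝ := ∑ i, (x i)^2 with hp2
  set p4 : ℝ := ∑ i, (x i)^4 with hp4
  have pair : ∀ i j : Fin n, i ≠ j → (x i + x j)^2 ≤ ((n:ℝ)-2) * (p2 - (x i)^2 - (x j)^2) := by
    intro i j hij
    have hs : ∑ k ∈ univ \ {i,j}, x k = -(x i + x j) := by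
      rw [sum_sdiff_eq_sub (subset_univ _), sum_pair hij, hx]; ring
    have hs2 : ∑ k ∈ univ \ {i,j}, (x k)^2 = p2 - (x i)^2 - (x j)^2 := by
      rw [sum_sdiff_eq_sub (subset_univ _), sum_pair hij, hp2]; ring
    have hcard : ((univ \ {i,j} : Finset (Fin n)).card : ℝ) = (n:ℝ) - 2 := by
      rw [card_sdiff_of_subset (subset_univ _), card_univ, Fintype.card_fin, card_pair hij]
      have h2 : 2 ≤ n := by omega
      push_cast [Nat.cast_sub h2]; ring
    have cs := sq_sum_le_card_mul_sum_sq (s := univ \ {i,j}) (f := x)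
    rw [hs, hs2, hcard, neg_sq] at cs
    exact cs
  have key : ∑ i, ∑ j, ((x i - x j)^2 * (x i + x j)^2)
      ≤ ∑ i, ∑ j, ((x i - x j)^2 * (((n:ℝ)-2) * (p2 - (x i)^2 - (x j)^2))) := by
    refine sum_le_sum fun i _ => sum_le_sum fun j _ => ?_
    rcases eq_or_ne i j with rfl | hij
    · simp
    · exact mul_le_mul_of_nonneg_left (pair i j hij) (sq_nonneg _)
  have idA : ∑ i, ∑ j, ((x i - x j)^2 * (x i + x j)^2) = 2*(n:ℝ)*p4 - 2*p2^2 := by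
    have : ∀ i j : Fin n, (x i - x j)^2 * (x i + x j)^2
        = (x i)^4 - 2*((x i)^2 * (x j)^2) + (x j)^4 := by intro i j; ring
    simp only [this, sum_add_distrib, sum_sub_distrib, sum_const, ← mul_sum, ← sum_mul,
      card_univ, Fintype.card_fin, nsmul_eq_mul, ← hp2, ← hp4]
    ring
  have idB : ∑ i, ∑ j, ((x i - x j)^2 * (((n:ℝ)-2) * (p2 - (x i)^2 - (x j)^2)))
      = ((n:ℝ)-2) * (2*((n:ℝ)-1)*p2^2 - 2*(n:ℝ)*p4) := by
    have : ∀ i j : Fin n, (x i - x j)^2 * (((n:ℝ)-2) * (p2 - (x i)^2 - (x j)^2))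
        = ((n:ℝ)-2) * ( ((x i)^2*p2 + (x j)^2*p2 - 2*(x i * x j)*p2)
            - ((x i)^4 + (x j)^4 + 2*((x i)^2*(x j)^2)
              - 2*((x i)^3 * x j) - 2*(x i * (x j)^3)) ) := by intro i j; ring
    simp only [this, ← mul_sum]
    congr 1
    simp only [sum_add_distrib, sum_sub_distrib, sum_const, ← mul_sum, ← sum_mul,
      card_univ, Fintype.card_fin, nsmul_eq_mul, ← hp2, ← hp4]
    rw [show ∑ i, x i = (0:ℝ) from hx]
    ring_nf
  rw [idA, idB] at key
  have hn3 : (3:ℝ) ≤ (n:ℝ) := by exact_mod_cast hn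
  nlinarith [key, sq_nonneg p2]

/-- Trace of a power of a real symmetric matrix is the power sum of eigenvalues. -/
theorem aux_trace_pow (n : ℕ) (A : Matrix (Fin n) (Fin n) ℝ) (hA : A.IsHermitian) (k : ℕ) :
    (A^k).trace = ∑ i, (hA.eigenvalues i)^k := by
  set U : Matrix (Fin n) (Fin n) ℝ := (hA.eigenvectorUnitary : Matrix (Fin n) (Fin n) ℝ) with hU
  set D : Matrix (Fin n) (Fin n) ℝ := Matrix.diagonal (RCLike.ofReal ∘ hA.eigenvalues) with hD
  have hUU : star U * U = 1 := Matrix.UnitaryGroup.star_mul_self _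
  have hUU' : U * star U = 1 := mul_eq_one_comm.mp hUU
  have hsp : A = U * D * star U := hA.spectral_theorem
  have hpow : A ^ k = U * D^k * star U := by
    induction k with
    | zero => simp [hUU']
    | succ m ih =>
        rw [pow_succ, ih, hsp, pow_succ]
        simp only [Matrix.mul_assoc]
        rw [← Matrix.mul_assoc (star U) U, hUU, Matrix.one_mul]
  rw [hpow, Matrix.trace_mul_comm, ← Matrix.mul_assoc, hUU, Matrix.one_mul, hD,
    Matrix.diagonal_pow, Matrix.trace_diagonal]
  simp

/-- `n(n-1) tr(A⁴) ≤ (n²-3n+3) tr(A²)²` for a symmetric traceless matrix. -/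
theorem aux_trace4 (n : ℕ) (hn : 3 ≤ n) (A : Matrix (Fin n) (Fin n) ℝ)
    (hA : A.IsSymm) (h0 : A.trace = 0) :
    (n:ℝ) * ((n:ℝ)-1) * (A^4).trace ≤ ((n:ℝ)^2 - 3*(n:ℝ) + 3) * ((A^2).trace)^2 := by
  have hH : A.IsHermitian := hA
  have h1 : ∑ i, hH.eigenvalues i = 0 := by
    have := aux_trace_pow n A hH 1
    simp only [pow_one] at this
    rw [← this, h0]
  rw [aux_trace_pow n A hH 4, aux_trace_pow n A hH 2]
  simpa using aux_lemmaV n hn hH.eigenvalues h1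

/-- Scalar endgame. -/
theorem aux_final (N X Y u w R H a : ℝ) (hN : 4 ≤ N) (hX : 0 ≤ X) (hY : 0 ≤ Y)
    (ha : a = Y + H^2/N) (hu : u^2 ≤ X*Y)
    (hw : w^2 * (N*(N-1)) ≤ X*(N-2)^2*Y^2) :
    0 ≤ a*X - (2*R*H/N)*u + (2*R/(N-2))*w + R^2*Y/(N-1) := by
  have hN0 : (0:ℝ) < N := by linarith
  have hN1 : (0:ℝ) < N - 1 := by linarith
  have hN2 : (0:ℝ) < N - 2 := by linarith
  -- (A): -2RHu ≤ H²X + R²Y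
  have hSA : (0:ℝ) ≤ H^2*X + R^2*Y := by positivity
  have hsqA : (2*R*H*u)^2 ≤ (H^2*X + R^2*Y)^2 := by
    nlinarith [sq_nonneg (H^2*X - R^2*Y), mul_le_mul_of_nonneg_left hu (sq_nonneg (2*R*H))]
  have hA : 2*R*H*u ≤ H^2*X + R^2*Y := by nlinarith [hsqA, hSA]
  -- (B): -2RwN(N-1) ≤ (N-2)(N(N-1)XY + R²Y)
  have hSB : (0:ℝ) ≤ (N-2)*(N*(N-1)*(X*Y) + R^2*Y) := by
    have : (0:ℝ) ≤ N*(N-1)*(X*Y) + R^2*Y := by positivity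
    exact mul_nonneg hN2.le this
  have hsqB : (2*R*w*(N*(N-1)))^2 ≤ ((N-2)*(N*(N-1)*(X*Y) + R^2*Y))^2 := by
    have h1 : (4*R^2*(N*(N-1))) * (w^2*(N*(N-1))) ≤ (4*R^2*(N*(N-1))) * (X*(N-2)^2*Y^2) := by
      apply mul_le_mul_of_nonneg_left hw
      positivity
    nlinarith [sq_nonneg ((N-2)*(N*(N-1)*(X*Y) - R^2*Y)), h1]
  have hB : -(2*R*w*(N*(N-1))) ≤ (N-2)*(N*(N-1)*(X*Y) + R^2*Y) := by nlinarith [hsqB, hSB]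
  -- combine
  have hA' : ((N-1)*(N-2))*(2*R*H*u) ≤ ((N-1)*(N-2))*(H^2*X + R^2*Y) :=
    mul_le_mul_of_nonneg_left hA (le_of_lt (mul_pos hN1 hN2))
  have hbig : 0 ≤ ((N-1)*(N-2))*(N*(Y*X) + H^2*X) - ((N-1)*(N-2))*(2*R*H*u)
      + N*(N-1)*(2*R*w) + N*(N-2)*(R^2*Y) := by
    have h3 := add_le_add hA' hB
    have h4 : ((N-1)*(N-2))*(2*R*H*u) + -(2*R*w*(N*(N-1)))
        = ((N-1)*(N-2))*(2*R*H*u) - N*(N-1)*(2*R*w) := by ring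
    have h5 : ((N-1)*(N-2))*(H^2*X + R^2*Y) + (N-2)*(N*(N-1)*(X*Y) + R^2*Y)
        = ((N-1)*(N-2))*(N*(Y*X) + H^2*X) + N*(N-2)*(R^2*Y) := by ring
    rw [h4, h5] at h3
    linarith [h3]
  have heq : a*X - (2*R*H/N)*u + (2*R/(N-2))*w + R^2*Y/(N-1)
      = (((N-1)*(N-2))*(N*(Y*X) + H^2*X) - ((N-1)*(N-2))*(2*R*H*u)
        + N*(N-1)*(2*R*w) + N*(N-2)*(R^2*Y)) / (N*(N-1)*(N-2)) := by
    rw [ha]; field_simp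
  rw [heq]
  positivity

/-- Expansion of a product of matrices shifted by multiples of the identity. -/
theorem aux_exp {n : ℕ} (P Q : Matrix (Fin n) (Fin n) ℝ) (p q : ℝ) :
    (P - p•(1:Matrix (Fin n) (Fin n) ℝ)) * (Q - q•1)
      = P*Q - p•Q - q•P + (q*p)•(1:Matrix (Fin n) (Fin n) ℝ) := by
  simp only [sub_mul, mul_sub, smul_mul_assoc, mul_smul_comm, smul_smul, smul_sub, one_mul, mul_one]
  abel

theorem aux_texp {n : ℕ} (P Q : Matrix (Fin n) (Fin n) ℝ) (p q : ℝ) :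
    ((P - p•(1:Matrix (Fin n) (Fin n) ℝ)) * (Q - q•1)).trace
      = (P*Q).trace - p*Q.trace - q*P.trace + q*p*n := by
  rw [aux_exp]
  simp [Matrix.trace_add, Matrix.trace_sub, Matrix.trace_smul, Matrix.trace_one]

theorem aux_symm_sub {n : ℕ} (P : Matrix (Fin n) (Fin n) ℝ) (hP : P.IsSymm) (p : ℝ) :
    (P - p•(1:Matrix (Fin n) (Fin n) ℝ)).IsSymm := by
  unfold Matrix.IsSymm at *
  rw [Matrix.transpose_sub, Matrix.transpose_smul, Matrix.transpose_one, hP]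

theorem aux_tsum {n : ℕ} (A B : Matrix (Fin n) (Fin n) ℝ) (hB : B.IsSymm) :
    (A*B).trace = ∑ p : Fin n × Fin n, A p.1 p.2 * B p.1 p.2 := by
  simp only [Matrix.trace, Matrix.mul_apply, Matrix.diag, Fintype.sum_prod_type]
  exact Finset.sum_congr rfl fun i _ => Finset.sum_congr rfl fun j _ => by rw [hB.apply]

set_option maxHeartbeats 2000000 in
/-- Pointwise pinching inequality (in an orthonormal basis for `g`):
for symmetric `Rc` and `h` on ℝⁿ, `n ≥ 4`,
`|h|²|Rc|² − (2R/(n−2))(H·⟨Rc,h⟩ − tr(Rc·h·h)) + R²(H²−|h|²)/((n−1)(n−2)) ≥ 0`. -/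
theorem stmt_0 (n : ℕ) (hn : 4 ≤ n)
    (Rc h : Matrix (Fin n) (Fin n) ℝ)
    (hRc : Rc.IsSymm) (hh : h.IsSymm) :
    0 ≤ (h * h).trace * (Rc * Rc).trace
      - 2 * Rc.trace / ((n : ℝ) - 2) *
          (h.trace * (Rc * h).trace - (Rc * h * h).trace)
      + Rc.trace ^ 2 * (h.trace ^ 2 - (h * h).trace) /
          (((n : ℝ) - 1) * ((n : ℝ) - 2)) := by
  set N : ℝ := (n:ℝ) with hNdef
  have hN4 : (4:ℝ) ≤ N := by rw [hNdef]; exact_mod_cast hn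
  have hN0 : (0:ℝ) < N := by linarith
  set R : ℝ := Rc.trace with hR
  set H : ℝ := h.trace with hH
  set a : ℝ := (h*h).trace with ha'
  set b : ℝ := (Rc*Rc).trace with hb'
  set c1 : ℝ := (Rc*h).trace with hc1'
  set c2 : ℝ := (Rc*h*h).trace with hc2'
  set E : Matrix (Fin n) (Fin n) ℝ := Rc - (R/N)•1 with hE
  set e : Matrix (Fin n) (Fin n) ℝ := h - (H/N)•1 with he
  have hEs : E.IsSymm := aux_symm_sub Rc hRc _
  have hes : e.IsSymm := aux_symm_sub h hh _
  -- scalar values of the traces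
  have tX : (E*E).trace = b - R^2/N := by
    rw [hE, aux_texp]
    field_simp; ring
  have tY : (e*e).trace = a - H^2/N := by
    rw [he, aux_texp]
    field_simp; ring
  have tu : (E*e).trace = c1 - R*H/N := by
    rw [hE, he, aux_texp]
    field_simp; ring
  have tE0 : E.trace = 0 := by
    rw [hE, Matrix.trace_sub, Matrix.trace_smul, Matrix.trace_one]
    simp only [smul_eq_mul]
    field_simp
    rw [Fintype.card_fin, ← hNdef, ← hR]; ring
  have te0 : e.trace = 0 := by
    rw [he, Matrix.trace_sub, Matrix.trace_smul, Matrix.trace_one]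
    simp only [smul_eq_mul]
    field_simp
    rw [Fintype.card_fin, ← hNdef, ← hH]; ring
  have hee : e*e = h*h - (H/N)•h - (H/N)•h + ((H/N)*(H/N))•1 := by rw [he, aux_exp]
  have hees : (e*e).IsSymm := by
    unfold Matrix.IsSymm at *
    rw [Matrix.transpose_mul, hes]
  have tw : (E*(e*e)).trace = c2 - 2*H*c1/N - R*a/N + 2*R*H^2/N^2 := by
    rw [hE, Matrix.sub_mul, Matrix.trace_sub, Matrix.smul_mul, Matrix.one_mul,
      Matrix.trace_smul, hee]
    simp only [Matrix.mul_add, Matrix.mul_sub, Matrix.trace_add, Matrix.trace_sub,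
      Matrix.mul_smul, Matrix.trace_smul, Matrix.mul_one, smul_eq_mul,
      Matrix.trace_one, ← Matrix.mul_assoc]
    rw [← hc2', ← hc1', ← ha', ← hH, ← hR]
    field_simp; rw [Fintype.card_fin, ← hNdef]; ring
  -- entrywise sum representations and Cauchy–Schwarz
  have hN1 : (0:ℝ) < N - 1 := by linarith
  have hN2 : (0:ℝ) < N - 2 := by linarith
  have sX : (E*E).trace = ∑ p : Fin n × Fin n, (E p.1 p.2)^2 := by
    rw [aux_tsum E E hEs]; exact Finset.sum_congr rfl fun p _ => (sq (E p.1 p.2)).symm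
  have sY : (e*e).trace = ∑ p : Fin n × Fin n, (e p.1 p.2)^2 := by
    rw [aux_tsum e e hes]; exact Finset.sum_congr rfl fun p _ => (sq (e p.1 p.2)).symm
  have hX0 : (0:ℝ) ≤ b - R^2/N := by
    rw [← tX, sX]; positivity
  have hY0 : (0:ℝ) ≤ a - H^2/N := by
    rw [← tY, sY]; positivity
  have hu2 : (c1 - R*H/N)^2 ≤ (b - R^2/N)*(a - H^2/N) := by
    rw [← tX, ← tY, ← tu, sX, sY, aux_tsum E e hes]
    exact Finset.sum_mul_sq_le_sq_mul_sq Finset.univ (fun p : Fin n × Fin n => E p.1 p.2) (fun p : Fin n × Fin n => e p.1 p.2)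
  -- the traceless part of e*e
  set M : Matrix (Fin n) (Fin n) ℝ := e*e - ((a - H^2/N)/N)•1 with hM
  have hMs : M.IsSymm := aux_symm_sub _ hees _
  have tM : (E*M).trace = c2 - 2*H*c1/N - R*a/N + 2*R*H^2/N^2 := by
    rw [hM, Matrix.mul_sub, Matrix.trace_sub, mul_smul_comm, Matrix.trace_smul,
      Matrix.mul_one, tE0, tw]
    simp
  have sM : (M*M).trace = ∑ p : Fin n × Fin n, (M p.1 p.2)^2 := by
    rw [aux_tsum M M hMs]; exact Finset.sum_congr rfl fun p _ => (sq (M p.1 p.2)).symm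
  have hZ0 : (0:ℝ) ≤ (M*M).trace := by rw [sM]; positivity
  have tMM : (M*M).trace = ((e*e)*(e*e)).trace - (a - H^2/N)^2/N := by
    rw [hM, aux_texp, tY]
    field_simp; ring
  have hw2 : (c2 - 2*H*c1/N - R*a/N + 2*R*H^2/N^2)^2 ≤ (b - R^2/N) * (M*M).trace := by
    rw [← tX, ← tM, sX, sM, aux_tsum E M hMs]
    exact Finset.sum_mul_sq_le_sq_mul_sq Finset.univ (fun p : Fin n × Fin n => E p.1 p.2) (fun p : Fin n × Fin n => M p.1 p.2)
  -- eigenvalue bound on tr(e⁴)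
  have he2 : e^2 = e*e := sq e
  have he4 : e^4 = (e*e)*(e*e) := by
    rw [show (4:ℕ) = 2+2 from rfl, pow_add, he2]
  have hZ := aux_trace4 n (by omega) e hes te0
  rw [he4, he2, tY] at hZ
  have hMMb : (M*M).trace * (N*(N-1)) ≤ (N-2)^2 * (a - H^2/N)^2 := by
    rw [tMM]
    rw [← hNdef] at hZ
    have hdiv : ((a - H^2/N)^2/N) * (N*(N-1)) = (N-1) * (a - H^2/N)^2 := by
      field_simp
    have hexp : ((e * e * (e * e)).trace - (a - H ^ 2 / N) ^ 2 / N) * (N * (N - 1))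
        = (e * e * (e * e)).trace * (N * (N-1)) - ((a - H^2/N)^2/N) * (N*(N-1)) := by ring
    rw [hexp, hdiv]
    nlinarith [hZ, sq_nonneg (a - H^2/N)]
  have hw : (c2 - 2*H*c1/N - R*a/N + 2*R*H^2/N^2)^2 * (N*(N-1))
      ≤ (b - R^2/N)*(N-2)^2*(a - H^2/N)^2 := by
    calc (c2 - 2*H*c1/N - R*a/N + 2*R*H^2/N^2)^2 * (N*(N-1))
        ≤ ((b - R^2/N) * (M*M).trace) * (N*(N-1)) := by
          apply mul_le_mul_of_nonneg_right hw2
          positivity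
      _ = (b - R^2/N) * ((M*M).trace * (N*(N-1))) := by ring
      _ ≤ (b - R^2/N) * ((N-2)^2 * (a - H^2/N)^2) := mul_le_mul_of_nonneg_left hMMb hX0
      _ = (b - R^2/N)*(N-2)^2*(a - H^2/N)^2 := by ring
  have key := aux_final N (b - R^2/N) (a - H^2/N) (c1 - R*H/N)
      (c2 - 2*H*c1/N - R*a/N + 2*R*H^2/N^2) R H a hN4 hX0 hY0 (by ring) hu2 hw
  have goal_eq : a * b - 2 * R / (N - 2) * (H * c1 - c2) + R ^ 2 * (H ^ 2 - a) / ((N - 1) * (N - 2))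
      = a*(b - R^2/N) - (2*R*H/N)*(c1 - R*H/N)
        + (2*R/(N-2))*(c2 - 2*H*c1/N - R*a/N + 2*R*H^2/N^2) + R^2*(a - H^2/N)/(N-1) := by
    field_simp
    ring
  linarith [key, goal_eq.ge, goal_eq.le]
end

section
/- Let n ≥ 3, let h₁,…,hₙ and r₁,…,rₙ be real numbers, and set s_k = Σᵢ hᵢᵏ. Then Q := (Σ rᵢ²)(Σ hᵢ²) + (2/(n−2))(Σ rᵢ)(−(Σ hᵢ)(Σ rᵢhᵢ) + Σ rᵢhᵢ²) + (1/((n−1)(n−2)))(Σ rᵢ)²((Σ hᵢ)² − Σ hᵢ²) ≥ 0. -/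
open Finset

lemma sum_poly4_aux {n : ℕ} (x : Fin n → ℝ) (a b c d e : ℝ) :
    ∑ i, (a + b * x i + c * (x i)^2 + d * (x i)^3 + e * (x i)^4)
      = (n:ℝ)*a + b*(∑ i, x i) + c*(∑ i, (x i)^2) + d*(∑ i, (x i)^3) + e*(∑ i, (x i)^4) := by
  simp only [Finset.sum_add_distrib, ← Finset.mul_sum, Finset.sum_const, Finset.card_univ,
    Fintype.card_fin, nsmul_eq_mul]

lemma sum_comb_aux {n : ℕ} (f g : Fin n → ℝ) (c0 c1 c2 c3 c4 c5 c6 : ℝ) :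
    ∑ i, (c0*(f i)^2 + c1*(f i * (g i)^2) + c2*(f i * g i) + c3*(f i) + c4*(g i)^2 + c5*(g i) + c6)
      = c0*(∑ i, (f i)^2) + c1*(∑ i, f i * (g i)^2) + c2*(∑ i, f i * g i) + c3*(∑ i, f i)
        + c4*(∑ i, (g i)^2) + c5*(∑ i, g i) + (n:ℝ)*c6 := by
  simp only [Finset.sum_add_distrib, ← Finset.mul_sum, Finset.sum_const, Finset.card_univ,
    Fintype.card_fin, nsmul_eq_mul]

lemma aux_nonneg {c a : ℝ} (hc : 0 < c) (h : 0 ≤ c * a) : 0 ≤ a := by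
  by_contra hn
  push_neg at hn
  nlinarith [mul_pos hc (neg_pos.mpr hn)]

lemma lemCS {n : ℕ} (x : Fin n → ℝ) (hx : ∑ i, x i = 0) :
    ((n:ℝ)*(∑ i, (x i)^3))^2
      ≤ (∑ i, (x i)^2) * ((n:ℝ)^2*(∑ i, (x i)^4) - (n:ℝ)*(∑ i, (x i)^2)^2) := by
  have cs := Finset.sum_mul_sq_le_sq_mul_sq Finset.univ x
    (fun i => (n:ℝ)*(x i)^2 - ∑ j, (x j)^2)
  have e1 : ∑ i, x i * ((n:ℝ)*(x i)^2 - ∑ j, (x j)^2) = (n:ℝ)*(∑ i, (x i)^3) := by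
    calc ∑ i, x i * ((n:ℝ)*(x i)^2 - ∑ j, (x j)^2)
        = ∑ i, ((0:ℝ) + (-(∑ j, (x j)^2)) * x i + 0 * (x i)^2 + (n:ℝ) * (x i)^3 + 0 * (x i)^4) :=
          Finset.sum_congr rfl (fun i _ => by ring)
      _ = (n:ℝ)*0 + (-(∑ j, (x j)^2))*(∑ i, x i) + 0*(∑ i, (x i)^2) + (n:ℝ)*(∑ i, (x i)^3)
            + 0*(∑ i, (x i)^4) := sum_poly4_aux x _ _ _ _ _
      _ = (n:ℝ)*(∑ i, (x i)^3) := by rw [hx]; ring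
  have e2 : ∑ i, ((n:ℝ)*(x i)^2 - ∑ j, (x j)^2)^2
      = (n:ℝ)^2*(∑ i, (x i)^4) - (n:ℝ)*(∑ i, (x i)^2)^2 := by
    calc ∑ i, ((n:ℝ)*(x i)^2 - ∑ j, (x j)^2)^2
        = ∑ i, ((∑ j, (x j)^2)^2 + 0 * x i + (-2*(n:ℝ)*(∑ j, (x j)^2)) * (x i)^2 + 0 * (x i)^3
            + (n:ℝ)^2 * (x i)^4) := Finset.sum_congr rfl (fun i _ => by ring)
      _ = (n:ℝ)*(∑ j, (x j)^2)^2 + 0*(∑ i, x i) + (-2*(n:ℝ)*(∑ j, (x j)^2))*(∑ i, (x i)^2)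
            + 0*(∑ i, (x i)^3) + (n:ℝ)^2*(∑ i, (x i)^4) := sum_poly4_aux x _ _ _ _ _
      _ = (n:ℝ)^2*(∑ i, (x i)^4) - (n:ℝ)*(∑ i, (x i)^2)^2 := by ring
  calc ((n:ℝ)*(∑ i, (x i)^3))^2 = (∑ i, x i * ((n:ℝ)*(x i)^2 - ∑ j, (x j)^2))^2 := by rw [e1]
    _ ≤ (∑ i, (x i)^2) * (∑ i, ((n:ℝ)*(x i)^2 - ∑ j, (x j)^2)^2) := cs
    _ = (∑ i, (x i)^2) * ((n:ℝ)^2*(∑ i, (x i)^4) - (n:ℝ)*(∑ i, (x i)^2)^2) := by rw [e2]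

lemma lemB {n : ℕ} (hn : 3 ≤ n) (x : Fin n → ℝ) (hx : ∑ i, x i = 0) :
    (n:ℝ)*((n:ℝ)-1)*(∑ i, (x i)^4) ≤ ((n:ℝ)^2-3*(n:ℝ)+3)*(∑ i, (x i)^2)^2 := by
  have hN : (3:ℝ) ≤ (n:ℝ) := by exact_mod_cast hn
  set N := (n:ℝ) with hNd
  set p2 := ∑ i, (x i)^2 with hp2d
  set p3 := ∑ i, (x i)^3 with hp3d
  set p4 := ∑ i, (x i)^4 with hp4d
  -- the quadratic atoms
  have inner : ∀ i : Fin n,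
      ∑ j, ((N-1)*(N-2)*(x i*x j) + (N-1)*((x i)^2+(x j)^2) - p2)^2
      = N*(((N-1)*(x i)^2 - p2)^2)
        + (((N-1)*(N-2))^2*(x i)^2 + 2*(N-1)*((N-1)*(x i)^2 - p2))*p2
        + (2*(N-1)^2*(N-2))*(x i)*p3 + (N-1)^2*p4 := by
    intro i
    calc ∑ j, ((N-1)*(N-2)*(x i*x j) + (N-1)*((x i)^2+(x j)^2) - p2)^2
        = ∑ j, ((((N-1)*(x i)^2 - p2)^2)
            + (2*(N-1)*(N-2)*(x i)*((N-1)*(x i)^2 - p2)) * x j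
            + (((N-1)*(N-2))^2*(x i)^2 + 2*(N-1)*((N-1)*(x i)^2 - p2)) * (x j)^2
            + (2*(N-1)^2*(N-2)*(x i)) * (x j)^3
            + ((N-1)^2) * (x j)^4) := Finset.sum_congr rfl (fun j _ => by ring)
      _ = N*(((N-1)*(x i)^2 - p2)^2)
            + (2*(N-1)*(N-2)*(x i)*((N-1)*(x i)^2 - p2))*(∑ j, x j)
            + (((N-1)*(N-2))^2*(x i)^2 + 2*(N-1)*((N-1)*(x i)^2 - p2))*(∑ j, (x j)^2)
            + (2*(N-1)^2*(N-2)*(x i))*(∑ j, (x j)^3)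
            + (N-1)^2*(∑ j, (x j)^4) := sum_poly4_aux x _ _ _ _ _
      _ = N*(((N-1)*(x i)^2 - p2)^2)
            + (((N-1)*(N-2))^2*(x i)^2 + 2*(N-1)*((N-1)*(x i)^2 - p2))*p2
            + (2*(N-1)^2*(N-2))*(x i)*p3 + (N-1)^2*p4 := by
          rw [hx, ← hp2d, ← hp3d, ← hp4d]; ring
  have total : ∑ i, ∑ j, ((N-1)*(N-2)*(x i*x j) + (N-1)*((x i)^2+(x j)^2) - p2)^2
      = 2*N*(N-1)^2*p4 + (((N-1)*(N-2))^2 + 2*(N-1)^2 + N^2 - 4*N*(N-1))*p2^2 := by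
    calc ∑ i, ∑ j, ((N-1)*(N-2)*(x i*x j) + (N-1)*((x i)^2+(x j)^2) - p2)^2
        = ∑ i, (N*(((N-1)*(x i)^2 - p2)^2)
            + (((N-1)*(N-2))^2*(x i)^2 + 2*(N-1)*((N-1)*(x i)^2 - p2))*p2
            + (2*(N-1)^2*(N-2))*(x i)*p3 + (N-1)^2*p4) :=
          Finset.sum_congr rfl (fun i _ => inner i)
      _ = ∑ i, ((N*p2^2 - 2*(N-1)*p2^2 + (N-1)^2*p4)
            + (2*(N-1)^2*(N-2)*p3) * x i
            + ((((N-1)*(N-2))^2 + 2*(N-1)^2 - 2*N*(N-1))*p2) * (x i)^2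
            + (0:ℝ) * (x i)^3 + (N*(N-1)^2) * (x i)^4) := Finset.sum_congr rfl (fun i _ => by ring)
      _ = N*(N*p2^2 - 2*(N-1)*p2^2 + (N-1)^2*p4)
            + (2*(N-1)^2*(N-2)*p3)*(∑ i, x i)
            + ((((N-1)*(N-2))^2 + 2*(N-1)^2 - 2*N*(N-1))*p2)*(∑ i, (x i)^2)
            + 0*(∑ i, (x i)^3) + (N*(N-1)^2)*(∑ i, (x i)^4) := sum_poly4_aux x _ _ _ _ _
      _ = 2*N*(N-1)^2*p4 + (((N-1)*(N-2))^2 + 2*(N-1)^2 + N^2 - 4*N*(N-1))*p2^2 := by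
          rw [hx, ← hp2d, ← hp4d]; ring
  have diag : ∑ i, (((N-1)*(N-2)*(x i*x i) + (N-1)*((x i)^2+(x i)^2) - p2))^2
      = (N^2-N)^2*p4 - 2*(N^2-N)*p2^2 + N*p2^2 := by
    calc ∑ i, (((N-1)*(N-2)*(x i*x i) + (N-1)*((x i)^2+(x i)^2) - p2))^2
        = ∑ i, (p2^2 + (0:ℝ) * x i + (-2*(N^2-N)*p2) * (x i)^2 + (0:ℝ) * (x i)^3
            + ((N^2-N)^2) * (x i)^4) := Finset.sum_congr rfl (fun i _ => by ring)
      _ = N*p2^2 + 0*(∑ i, x i) + (-2*(N^2-N)*p2)*(∑ i, (x i)^2) + 0*(∑ i, (x i)^3)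
            + (N^2-N)^2*(∑ i, (x i)^4) := sum_poly4_aux x _ _ _ _ _
      _ = (N^2-N)^2*p4 - 2*(N^2-N)*p2^2 + N*p2^2 := by rw [← hp2d, ← hp4d]; ring
  have mono : ∑ i, (((N-1)*(N-2)*(x i*x i) + (N-1)*((x i)^2+(x i)^2) - p2))^2
      ≤ ∑ i, ∑ j, ((N-1)*(N-2)*(x i*x j) + (N-1)*((x i)^2+(x j)^2) - p2)^2 :=
    Finset.sum_le_sum (fun i _ =>
      Finset.single_le_sum (f := fun j => ((N-1)*(N-2)*(x i*x j) + (N-1)*((x i)^2+(x j)^2) - p2)^2)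
        (fun j _ => sq_nonneg _) (Finset.mem_univ i))
  rw [total, diag] at mono
  have hfac : 0 < (N-1)*(N-2) := by nlinarith
  have key : 0 ≤ (N-1)*(N-2)*((N^2-3*N+3)*p2^2 - N*(N-1)*p4) := by nlinarith [mono]
  have := aux_nonneg hfac key
  linarith

lemma klx {n : ℕ} (hn : 3 ≤ n) (x : Fin n → ℝ) (hx : ∑ i, x i = 0) (t : ℝ) :
    ((n:ℝ)-1) * (∑ i, ((n:ℝ)*(x i)^2 - (n:ℝ)*((n:ℝ)-2)*t*(x i) - ∑ j, (x j)^2)^2)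
      ≤ (n:ℝ)^2*((n:ℝ)-2)^2*(∑ i, (x i)^2)*((∑ i, (x i)^2) + (n:ℝ)*t^2) := by
  have hN : (3:ℝ) ≤ (n:ℝ) := by exact_mod_cast hn
  have hB := lemB hn x hx
  have hC := lemCS x hx
  have hp2n : (0:ℝ) ≤ ∑ i, (x i)^2 := Finset.sum_nonneg (fun i _ => sq_nonneg _)
  set N := (n:ℝ) with hNd
  set p2 := ∑ i, (x i)^2 with hp2d
  set p3 := ∑ i, (x i)^3 with hp3d
  set p4 := ∑ i, (x i)^4 with hp4d
  have hexp : ∑ i, (N*(x i)^2 - N*(N-2)*t*(x i) - p2)^2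
      = N^2*p4 - 2*N^2*(N-2)*t*p3 + N^2*(N-2)^2*t^2*p2 - N*p2^2 := by
    calc ∑ i, (N*(x i)^2 - N*(N-2)*t*(x i) - p2)^2
        = ∑ i, (p2^2 + (2*N*(N-2)*t*p2) * x i + (N^2*(N-2)^2*t^2 - 2*N*p2) * (x i)^2
            + (-2*N^2*(N-2)*t) * (x i)^3 + N^2 * (x i)^4) :=
          Finset.sum_congr rfl (fun i _ => by ring)
      _ = N*p2^2 + (2*N*(N-2)*t*p2)*(∑ i, x i) + (N^2*(N-2)^2*t^2 - 2*N*p2)*(∑ i, (x i)^2)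
            + (-2*N^2*(N-2)*t)*(∑ i, (x i)^3) + N^2*(∑ i, (x i)^4) := sum_poly4_aux x _ _ _ _ _
      _ = N^2*p4 - 2*N^2*(N-2)*t*p3 + N^2*(N-2)^2*t^2*p2 - N*p2^2 := by
          rw [hx, ← hp2d, ← hp3d, ← hp4d]; ring
  rw [hexp]
  rcases eq_or_lt_of_le hp2n with h0 | hpos
  · -- p2 = 0 : all x vanish
    have hz : ∀ i ∈ Finset.univ, (x i)^2 = 0 := by
      intro i _
      have := (Finset.sum_eq_zero_iff_of_nonneg (fun i _ => sq_nonneg (x i))).mp h0.symm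
      exact this i (Finset.mem_univ i)
    have hzi : ∀ i : Fin n, x i = 0 := fun i => by
      have := hz i (Finset.mem_univ i); exact (pow_eq_zero_iff two_ne_zero).mp this
    have h3 : p3 = 0 := by rw [hp3d]; exact Finset.sum_eq_zero (fun i _ => by rw [hzi i]; ring)
    have h4 : p4 = 0 := by rw [hp4d]; exact Finset.sum_eq_zero (fun i _ => by rw [hzi i]; ring)
    rw [h3, h4, ← h0]
    ring_nf
    exact le_rfl
  · -- p2 > 0
    have F0 : (0:ℝ) ≤ (N*(N-2)*p2*t + N*(N-1)*p3)^2 := sq_nonneg _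
    have F1 : (0:ℝ) ≤ (N-1)^2 * (p2*(N^2*p4 - N*p2^2) - (N*p3)^2) :=
      mul_nonneg (sq_nonneg _) (by linarith)
    have F2 : (0:ℝ) ≤ N^2 * (p2 * ((N^2-3*N+3)*p2^2 - N*(N-1)*p4)) :=
      mul_nonneg (sq_nonneg _) (mul_nonneg (le_of_lt hpos) (by linarith))
    have hid : p2 * (N^2*(N-2)^2*p2*(p2+N*t^2)
          - (N-1)*(N^2*p4 - 2*N^2*(N-2)*t*p3 + N^2*(N-2)^2*t^2*p2 - N*p2^2))
        = (N*(N-2)*p2*t + N*(N-1)*p3)^2 + (N-1)^2*(p2*(N^2*p4 - N*p2^2) - (N*p3)^2)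
          + N^2*(p2*((N^2-3*N+3)*p2^2 - N*(N-1)*p4)) := by ring
    have key : 0 ≤ p2 * (N^2*(N-2)^2*p2*(p2+N*t^2)
        - (N-1)*(N^2*p4 - 2*N^2*(N-2)*t*p3 + N^2*(N-2)^2*t^2*p2 - N*p2^2)) := by
      rw [hid]; linarith
    have := aux_nonneg hpos key
    linarith

lemma assemble (N s1 s2 A B C D p2 G2 GW T : ℝ)
    (hN : 3 ≤ N)
    (hp2 : p2 = N^2*s2 - N*s1^2)
    (hG2 : G2 = N^2*A - N*B^2)
    (hGW : GW = N^4*D - N^4*s1*C - N^3*B*(s2-s1^2))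
    (hp2n : 0 ≤ p2) (hG2n : 0 ≤ G2) (hTn : 0 ≤ T)
    (hCS : GW^2 ≤ T*G2)
    (hKL : (N-1)*T ≤ N^2*(N-2)^2*p2*(p2+N*s1^2)) :
    0 ≤ A * s2 + 2 / (N - 2) * B * (-s1 * C + D) + 1 / ((N - 1) * (N - 2)) * B ^ 2 * (s1 ^ 2 - s2) := by
  have h1 : (0:ℝ) < N - 1 := by linarith
  have h2 : (0:ℝ) < N - 2 := by linarith
  have hS : (0:ℝ) ≤ p2 + N*s1^2 := by nlinarith [sq_nonneg s1]
  have ha : 0 ≤ (N-1)*(N-2)*(p2+N*s1^2)*G2 :=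
    mul_nonneg (mul_nonneg (mul_nonneg h1.le h2.le) hS) hG2n
  have hc : 0 ≤ N^2*(N-2)*p2*B^2 :=
    mul_nonneg (mul_nonneg (mul_nonneg (sq_nonneg N) h2.le) hp2n) (sq_nonneg B)
  have step1 : (N-1)^2*B^2*GW^2 ≤ (N-1)^2*B^2*(T*G2) :=
    mul_le_mul_of_nonneg_left hCS (by positivity)
  have step2 : ((N-1)*(B^2*G2))*((N-1)*T)
      ≤ ((N-1)*(B^2*G2))*(N^2*(N-2)^2*p2*(p2+N*s1^2)) :=
    mul_le_mul_of_nonneg_left hKL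
      (mul_nonneg h1.le (mul_nonneg (sq_nonneg B) hG2n))
  have habc : (2*(N-1)*B*GW)^2
      ≤ 4*((N-1)*(N-2)*(p2+N*s1^2)*G2)*(N^2*(N-2)*p2*B^2) := by nlinarith [step1, step2]
  have key : 0 ≤ (N-1)*(N-2)*(p2+N*s1^2)*G2 + 2*(N-1)*B*GW + N^2*(N-2)*p2*B^2 := by
    nlinarith [ha, hc, habc,
      sq_nonneg ((N-1)*(N-2)*(p2+N*s1^2)*G2 - N^2*(N-2)*p2*B^2)]
  have hId : N^4*(N-1)*(N-2)*(A * s2 + 2 / (N - 2) * B * (-s1 * C + D)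
        + 1 / ((N - 1) * (N - 2)) * B ^ 2 * (s1 ^ 2 - s2))
      = (N-1)*(N-2)*(p2+N*s1^2)*G2 + 2*(N-1)*B*GW + N^2*(N-2)*p2*B^2 := by
    rw [hp2, hG2, hGW]
    field_simp
    ring
  have hpos : (0:ℝ) < N^4*(N-1)*(N-2) :=
    mul_pos (mul_pos (pow_pos (by linarith) 4) h1) h2
  exact aux_nonneg hpos (hId ▸ key)

/-- Nonnegativity of the degree-4 polynomial `Q` in `2n` variables. -/
theorem stmt_1 (n : ℕ) (hn : 3 ≤ n) (h r : Fin n → ℝ) :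
    0 ≤ (∑ i, (r i) ^ 2) * (∑ i, (h i) ^ 2)
      + 2 / ((n : ℝ) - 2) * (∑ i, r i) *
          (-(∑ i, h i) * (∑ i, r i * h i) + ∑ i, r i * (h i) ^ 2)
      + 1 / (((n : ℝ) - 1) * ((n : ℝ) - 2)) * (∑ i, r i) ^ 2 *
          ((∑ i, h i) ^ 2 - ∑ i, (h i) ^ 2) := by
  have hN : (3:ℝ) ≤ (n:ℝ) := by exact_mod_cast hn
  set X : Fin n → ℝ := fun i => (n:ℝ) * h i - ∑ j, h j with hXd
  set Rv : Fin n → ℝ := fun i => (n:ℝ) * r i - ∑ j, r j with hRvd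
  set W : Fin n → ℝ := fun i =>
    (n:ℝ)*(X i)^2 - (n:ℝ)*((n:ℝ)-2)*(∑ j, h j)*(X i) - ∑ j, (X j)^2 with hWd
  have hx0 : ∑ i, X i = 0 := by
    calc ∑ i, X i
        = ∑ i, ((0:ℝ)*(r i)^2 + 0*(r i * (h i)^2) + 0*(r i * h i) + 0*(r i)
            + 0*(h i)^2 + (n:ℝ)*(h i) + (-(∑ j, h j))) :=
          Finset.sum_congr rfl (fun i _ => by rw [hXd]; ring)
      _ = 0*(∑ i, (r i)^2) + 0*(∑ i, r i * (h i)^2) + 0*(∑ i, r i * h i) + 0*(∑ i, r i)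
            + 0*(∑ i, (h i)^2) + (n:ℝ)*(∑ i, h i) + (n:ℝ)*(-(∑ j, h j)) :=
          sum_comb_aux r h _ _ _ _ _ _ _
      _ = 0 := by ring
  have hp2 : ∑ i, (X i)^2 = (n:ℝ)^2*(∑ i, (h i)^2) - (n:ℝ)*(∑ i, h i)^2 := by
    calc ∑ i, (X i)^2
        = ∑ i, ((0:ℝ)*(r i)^2 + 0*(r i * (h i)^2) + 0*(r i * h i) + 0*(r i)
            + (n:ℝ)^2*(h i)^2 + (-2*(n:ℝ)*(∑ j, h j))*(h i) + (∑ j, h j)^2) :=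
          Finset.sum_congr rfl (fun i _ => by rw [hXd]; ring)
      _ = 0*(∑ i, (r i)^2) + 0*(∑ i, r i * (h i)^2) + 0*(∑ i, r i * h i) + 0*(∑ i, r i)
            + (n:ℝ)^2*(∑ i, (h i)^2) + (-2*(n:ℝ)*(∑ j, h j))*(∑ i, h i)
            + (n:ℝ)*(∑ j, h j)^2 := sum_comb_aux r h _ _ _ _ _ _ _
      _ = (n:ℝ)^2*(∑ i, (h i)^2) - (n:ℝ)*(∑ i, h i)^2 := by ring
  have hG2 : ∑ i, (Rv i)^2 = (n:ℝ)^2*(∑ i, (r i)^2) - (n:ℝ)*(∑ i, r i)^2 := by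
    calc ∑ i, (Rv i)^2
        = ∑ i, ((n:ℝ)^2*(r i)^2 + 0*(r i * (h i)^2) + 0*(r i * h i)
            + (-2*(n:ℝ)*(∑ j, r j))*(r i) + 0*(h i)^2 + 0*(h i) + (∑ j, r j)^2) :=
          Finset.sum_congr rfl (fun i _ => by rw [hRvd]; ring)
      _ = (n:ℝ)^2*(∑ i, (r i)^2) + 0*(∑ i, r i * (h i)^2) + 0*(∑ i, r i * h i)
            + (-2*(n:ℝ)*(∑ j, r j))*(∑ i, r i) + 0*(∑ i, (h i)^2) + 0*(∑ i, h i)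
            + (n:ℝ)*(∑ j, r j)^2 := sum_comb_aux r h _ _ _ _ _ _ _
      _ = (n:ℝ)^2*(∑ i, (r i)^2) - (n:ℝ)*(∑ i, r i)^2 := by ring
  have hGW : ∑ i, W i * Rv i
      = (n:ℝ)^4*(∑ i, r i * (h i)^2) - (n:ℝ)^4*(∑ i, h i)*(∑ i, r i * h i)
        - (n:ℝ)^3*(∑ i, r i)*((∑ i, (h i)^2) - (∑ i, h i)^2) := by
    calc ∑ i, W i * Rv i
        = ∑ i, ((0:ℝ)*(r i)^2 + (n:ℝ)^4*(r i * (h i)^2) + (-(n:ℝ)^4*(∑ j, h j))*(r i * h i)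
            + ((n:ℝ)^2*((n:ℝ)-1)*(∑ j, h j)^2 - (n:ℝ)*(∑ j, (X j)^2))*(r i)
            + (-(n:ℝ)^3*(∑ j, r j))*(h i)^2 + ((n:ℝ)^3*(∑ j, h j)*(∑ j, r j))*(h i)
            + (-((n:ℝ)*((n:ℝ)-1)*(∑ j, h j)^2 - (∑ j, (X j)^2))*(∑ j, r j))) :=
          Finset.sum_congr rfl (fun i _ => by rw [hWd, hRvd, hXd]; ring)
      _ = 0*(∑ i, (r i)^2) + (n:ℝ)^4*(∑ i, r i * (h i)^2)
            + (-(n:ℝ)^4*(∑ j, h j))*(∑ i, r i * h i)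
            + ((n:ℝ)^2*((n:ℝ)-1)*(∑ j, h j)^2 - (n:ℝ)*(∑ j, (X j)^2))*(∑ i, r i)
            + (-(n:ℝ)^3*(∑ j, r j))*(∑ i, (h i)^2) + ((n:ℝ)^3*(∑ j, h j)*(∑ j, r j))*(∑ i, h i)
            + (n:ℝ)*(-((n:ℝ)*((n:ℝ)-1)*(∑ j, h j)^2 - (∑ j, (X j)^2))*(∑ j, r j)) :=
          sum_comb_aux r h _ _ _ _ _ _ _
      _ = (n:ℝ)^4*(∑ i, r i * (h i)^2) - (n:ℝ)^4*(∑ i, h i)*(∑ i, r i * h i)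
            - (n:ℝ)^3*(∑ i, r i)*((∑ i, (h i)^2) - (∑ i, h i)^2) := by ring
  have hp2n : (0:ℝ) ≤ ∑ i, (X i)^2 := Finset.sum_nonneg (fun i _ => sq_nonneg _)
  have hG2n : (0:ℝ) ≤ ∑ i, (Rv i)^2 := Finset.sum_nonneg (fun i _ => sq_nonneg _)
  have hTn : (0:ℝ) ≤ ∑ i, (W i)^2 := Finset.sum_nonneg (fun i _ => sq_nonneg _)
  have hCS : (∑ i, W i * Rv i)^2 ≤ (∑ i, (W i)^2) * (∑ i, (Rv i)^2) :=
    Finset.sum_mul_sq_le_sq_mul_sq Finset.univ W Rv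
  have hKL : ((n:ℝ)-1) * (∑ i, (W i)^2)
      ≤ (n:ℝ)^2*((n:ℝ)-2)^2*(∑ i, (X i)^2)*((∑ i, (X i)^2) + (n:ℝ)*(∑ j, h j)^2) := by
    have := klx hn X hx0 (∑ j, h j)
    calc ((n:ℝ)-1) * (∑ i, (W i)^2)
        = ((n:ℝ)-1) * (∑ i, ((n:ℝ)*(X i)^2 - (n:ℝ)*((n:ℝ)-2)*(∑ j, h j)*(X i) - ∑ j, (X j)^2)^2) := by
          rfl
      _ ≤ (n:ℝ)^2*((n:ℝ)-2)^2*(∑ i, (X i)^2)*((∑ i, (X i)^2) + (n:ℝ)*(∑ j, h j)^2) := this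
  exact assemble ((n:ℝ)) (∑ i, h i) (∑ i, (h i)^2) (∑ i, (r i)^2) (∑ i, r i)
    (∑ i, r i * h i) (∑ i, r i * (h i)^2)
    (∑ i, (X i)^2) (∑ i, (Rv i)^2) (∑ i, W i * Rv i) (∑ i, (W i)^2)
    hN hp2 hG2 (by rw [hGW]) hp2n hG2n hTn hCS hKL
end

section
/- Let n ≥ 3, h₁,…,hₙ ∈ ℝ, s_k = Σᵢ hᵢᵏ for k = 1,…,4, α₀ = (1,…,1)ᵀ, α₁ = (hᵢ)ᵀ, α₂ = (hᵢ²)ᵀ, and β = (s₁² − s₂)α₀/(2(n−1)(n−2)) − s₁α₁/(n−2) + α₂/(n−2). Then (s₂ + α₀ᵀβ)² − n βᵀβ ≥ 0. -/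
set_option maxHeartbeats 1000000

open Finset

private lemma schur2 (a b c : ℝ) :
    0 ≤ (a-b)^2*(a^2+b^2-c^2) + (a-c)^2*(a^2+c^2-b^2) + (b-c)^2*(b^2+c^2-a^2) := by
  nlinarith [sq_nonneg ((a-b)*(a+b-c)), sq_nonneg ((a-c)*(a+c-b)), sq_nonneg ((b-c)*(b+c-a)),
    sq_nonneg (a-b), sq_nonneg (a-c), sq_nonneg (b-c), sq_nonneg (a+b-c), sq_nonneg (a+c-b),
    sq_nonneg (b+c-a), sq_nonneg (a*b+b*c+c*a-a^2-b^2-c^2)]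

private lemma sum_sub_sq (n : ℕ) (f : Fin n → ℝ) :
    ∑ i, ∑ j, (f i - f j)^2 = 2*((n:ℝ)*(∑ i, (f i)^2)) - 2*(∑ i, f i)^2 := by
  have hin : ∀ i : Fin n, ∑ j, (f i - f j)^2
      = (n:ℝ)*(f i)^2 - 2*(f i)*(∑ j, f j) + ∑ j, (f j)^2 := by
    intro i
    have h1 : ∀ j : Fin n, (f i - f j)^2 = (f i)^2 - 2*(f i)*(f j) + (f j)^2 := fun j => by ring
    rw [Finset.sum_congr rfl fun j _ => h1 j, Finset.sum_add_distrib, Finset.sum_sub_distrib,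
      Finset.sum_const, Finset.card_univ, Fintype.card_fin, nsmul_eq_mul, ← Finset.mul_sum]
  rw [Finset.sum_congr rfl fun i _ => hin i, Finset.sum_add_distrib, Finset.sum_sub_distrib,
    Finset.sum_const, Finset.card_univ, Fintype.card_fin, nsmul_eq_mul,
    ← Finset.mul_sum, ← Finset.sum_mul, ← Finset.mul_sum]
  ring

private lemma erase2_sum (n : ℕ) (f : Fin n → ℝ) {i j : Fin n} (hij : i ≠ j) :
    ∑ k ∈ (Finset.univ.erase i).erase j, f k = (∑ k, f k) - f i - f j := by
  have hjmem : j ∈ Finset.univ.erase i := Finset.mem_erase.mpr ⟨Ne.symm hij, Finset.mem_univ j⟩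
  have t1 := Finset.sum_erase_add (Finset.univ.erase i) f hjmem
  have t2 := Finset.sum_erase_add Finset.univ f (Finset.mem_univ i)
  linarith

private lemma erase2_card (n : ℕ) {i j : Fin n} (hij : i ≠ j) :
    ((Finset.univ.erase i).erase j).card = n - 2 := by
  have hjmem : j ∈ Finset.univ.erase i := Finset.mem_erase.mpr ⟨Ne.symm hij, Finset.mem_univ j⟩
  rw [Finset.card_erase_of_mem hjmem, Finset.card_erase_of_mem (Finset.mem_univ i),
    Finset.card_univ, Fintype.card_fin]
  omega

private def uu (n : ℕ) (h : Fin n → ℝ) (i j k : Fin n) : ℝ :=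
  if i = j ∨ k = i ∨ k = j then 0 else (h i - h j)^2*((h i)^2+(h j)^2-(h k)^2)

private lemma key2 (n : ℕ) (hn : 3 ≤ n) (h : Fin n → ℝ) :
    0 ≤ ∑ i, ∑ j, (h i - h j)^2*(((n:ℝ)-1)*((h i)^2+(h j)^2) - ∑ k, (h k)^2) := by
  have hc2 : ((n - 2 : ℕ) : ℝ) = (n:ℝ) - 2 := by
    have h2 : 2 ≤ n := by omega
    rw [Nat.cast_sub h2]; norm_num
  have step1 : ∀ i j : Fin n, ∑ k, uu n h i j k
      = (h i - h j)^2*(((n:ℝ)-1)*((h i)^2+(h j)^2) - ∑ k, (h k)^2) := by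
    intro i j
    by_cases hij : i = j
    · subst hij; simp [uu]
    · have hsub : ∑ k, uu n h i j k = ∑ k ∈ (Finset.univ.erase i).erase j, uu n h i j k := by
        refine (Finset.sum_subset (Finset.subset_univ _) ?_).symm
        intro k _ hk
        unfold uu
        by_cases hkj : k = j
        · rw [if_pos (Or.inr (Or.inr hkj))]
        · by_cases hki : k = i
          · rw [if_pos (Or.inr (Or.inl hki))]
          · exact absurd (Finset.mem_erase.mpr ⟨hkj, Finset.mem_erase.mpr ⟨hki, Finset.mem_univ k⟩⟩) hk
      have hcongr : ∑ k ∈ (Finset.univ.erase i).erase j, uu n h i j k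
          = ∑ k ∈ (Finset.univ.erase i).erase j, (h i - h j)^2*((h i)^2+(h j)^2-(h k)^2) := by
        refine Finset.sum_congr rfl fun k hk => ?_
        rw [Finset.mem_erase, Finset.mem_erase] at hk
        unfold uu
        rw [if_neg]
        rintro (hh | hh | hh)
        · exact hij hh
        · exact hk.2.1 hh
        · exact hk.1 hh
      rw [hsub, hcongr, ← Finset.mul_sum]
      congr 1
      rw [Finset.sum_sub_distrib, Finset.sum_const, erase2_card n hij,
        erase2_sum n (fun k => (h k)^2) hij, nsmul_eq_mul, hc2]
      ring
  have hgoal : ∑ i, ∑ j, (h i - h j)^2*(((n:ℝ)-1)*((h i)^2+(h j)^2) - ∑ k, (h k)^2)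
      = ∑ i, ∑ j, ∑ k, uu n h i j k :=
    Finset.sum_congr rfl fun i _ => Finset.sum_congr rfl fun j _ => (step1 i j).symm
  rw [hgoal]
  have perm1 : ∑ i, ∑ j, ∑ k, uu n h i k j = ∑ i, ∑ j, ∑ k, uu n h i j k :=
    Finset.sum_congr rfl fun i _ => Finset.sum_comm
  have perm2 : ∑ i, ∑ j, ∑ k, uu n h j k i = ∑ i, ∑ j, ∑ k, uu n h i j k := by
    rw [Finset.sum_comm]
    exact Finset.sum_congr rfl fun x _ => Finset.sum_comm
  have pointwise : ∀ i j k : Fin n, 0 ≤ uu n h i j k + uu n h i k j + uu n h j k i := by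
    intro i j k
    by_cases hij : i = j
    · subst hij; simp [uu]
    · by_cases hik : i = k
      · subst hik; simp [uu]
      · by_cases hjk : j = k
        · subst hjk; simp [uu]
        · have e1 : uu n h i j k = (h i - h j)^2*((h i)^2+(h j)^2-(h k)^2) := by
            unfold uu; rw [if_neg]; rintro (hh | hh | hh)
            exacts [hij hh, hik hh.symm, hjk hh.symm]
          have e2 : uu n h i k j = (h i - h k)^2*((h i)^2+(h k)^2-(h j)^2) := by
            unfold uu; rw [if_neg]; rintro (hh | hh | hh)
            exacts [hik hh, hij hh.symm, hjk hh]
          have e3 : uu n h j k i = (h j - h k)^2*((h j)^2+(h k)^2-(h i)^2) := by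
            unfold uu; rw [if_neg]; rintro (hh | hh | hh)
            exacts [hjk hh, hij hh, hik hh]
          rw [e1, e2, e3]
          exact schur2 (h i) (h j) (h k)
  have hnn : 0 ≤ ∑ i, ∑ j, ∑ k, (uu n h i j k + uu n h i k j + uu n h j k i) :=
    Finset.sum_nonneg fun i _ => Finset.sum_nonneg fun j _ => Finset.sum_nonneg fun k _ =>
      pointwise i j k
  have hsplit : ∑ i, ∑ j, ∑ k, (uu n h i j k + uu n h i k j + uu n h j k i)
      = (∑ i, ∑ j, ∑ k, uu n h i j k) + (∑ i, ∑ j, ∑ k, uu n h i k j)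
        + (∑ i, ∑ j, ∑ k, uu n h j k i) := by
    simp_rw [Finset.sum_add_distrib]
  rw [hsplit, perm1, perm2] at hnn
  linarith

/-- `(s₂ + α₀ᵀβ)² − n βᵀβ ≥ 0` for the specific vector `β`. -/
theorem stmt_4 (n : ℕ) (hn : 3 ≤ n) (h : Fin n → ℝ)
    (s₁ s₂ : ℝ) (hs₁ : s₁ = ∑ i, h i) (hs₂ : s₂ = ∑ i, (h i) ^ 2)
    (β : Fin n → ℝ)
    (hβ : ∀ i, β i = (s₁ ^ 2 - s₂) / (2 * ((n : ℝ) - 1) * ((n : ℝ) - 2))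
        - s₁ * h i / ((n : ℝ) - 2) + (h i) ^ 2 / ((n : ℝ) - 2)) :
    0 ≤ (s₂ + ∑ i, β i) ^ 2 - (n : ℝ) * ∑ i, (β i) ^ 2 := by
  have hn3 : (3:ℝ) ≤ (n:ℝ) := by exact_mod_cast hn
  have hn1 : (0:ℝ) < (n:ℝ) - 1 := by linarith
  have hn2 : (0:ℝ) < (n:ℝ) - 2 := by linarith
  have hc2 : ((n - 2 : ℕ) : ℝ) = (n:ℝ) - 2 := by
    have h2 : 2 ≤ n := by omega
    rw [Nat.cast_sub h2]; norm_num
  -- e1 : sum of β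
  have e1 : 2*((n:ℝ)-1)*(∑ i, β i) = s₂ - s₁^2 := by
    have hsum : ∑ i, β i = (n:ℝ)*((s₁^2 - s₂)/(2*((n:ℝ)-1)*((n:ℝ)-2)))
        - s₁*(∑ i, h i)/((n:ℝ)-2) + (∑ i, (h i)^2)/((n:ℝ)-2) := by
      rw [Finset.sum_congr rfl fun i _ => hβ i, Finset.sum_add_distrib, Finset.sum_sub_distrib,
        Finset.sum_const, Finset.card_univ, Fintype.card_fin, nsmul_eq_mul,
        ← Finset.sum_div, ← Finset.mul_sum, ← Finset.sum_div]
    rw [hsum, ← hs₁, ← hs₂]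
    field_simp
    ring
  -- hd : difference formula
  have hd : ∀ i j : Fin n, ((n:ℝ)-2)*(β i - β j) = (h i - h j)*(h i + h j - s₁) := by
    intro i j
    rw [hβ i, hβ j]
    field_simp
    ring
  -- e2 : Sd in terms of A, B
  have e2 : ∑ i, ∑ j, (β i - β j)^2
      = 2*((n:ℝ)*(∑ i, (β i)^2)) - 2*(∑ i, β i)^2 := sum_sub_sq n β
  -- e3 : Sh = (n-2)^2 * Sd
  have e3 : ∑ i, ∑ j, ((h i - h j)*(h i + h j - s₁))^2
      = ((n:ℝ)-2)^2 * ∑ i, ∑ j, (β i - β j)^2 := by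
    have : ∀ i j : Fin n, ((h i - h j)*(h i + h j - s₁))^2 = ((n:ℝ)-2)^2*(β i - β j)^2 := by
      intro i j; rw [← hd i j]; ring
    rw [Finset.sum_congr rfl fun i _ => Finset.sum_congr rfl fun j _ => this i j]
    simp_rw [← Finset.mul_sum]
  -- e4 : R
  have e4 : ∑ i, ∑ j, (h i - h j)^2 = 2*((n:ℝ)*s₂) - 2*s₁^2 := by
    have := sum_sub_sq n h
    rw [← hs₁, ← hs₂] at this
    exact this
  -- pointwise Cauchy-Schwarz
  have hCS : ∀ i j : Fin n, ((h i - h j)*(h i + h j - s₁))^2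
      ≤ ((n:ℝ)-2)*((h i - h j)^2*(s₂ - (h i)^2 - (h j)^2)) := by
    intro i j
    by_cases hij : i = j
    · subst hij; simp
    · have hsum1 : ∑ k ∈ (Finset.univ.erase i).erase j, h k = s₁ - h i - h j := by
        rw [erase2_sum n h hij, ← hs₁]
      have hsum2 : ∑ k ∈ (Finset.univ.erase i).erase j, (h k)^2 = s₂ - (h i)^2 - (h j)^2 := by
        rw [erase2_sum n (fun k => (h k)^2) hij, ← hs₂]
      have cs := sq_sum_le_card_mul_sum_sq (s := (Finset.univ.erase i).erase j) (f := h)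
      rw [erase2_card n hij, hsum1, hsum2, hc2] at cs
      calc ((h i - h j)*(h i + h j - s₁))^2 = (h i - h j)^2 * (s₁ - h i - h j)^2 := by ring
        _ ≤ (h i - h j)^2 * (((n:ℝ)-2) * (s₂ - (h i)^2 - (h j)^2)) :=
            mul_le_mul_of_nonneg_left cs (sq_nonneg _)
        _ = ((n:ℝ)-2)*((h i - h j)^2*(s₂ - (h i)^2 - (h j)^2)) := by ring
  -- e6
  have e6 : ∑ i, ∑ j, ((h i - h j)*(h i + h j - s₁))^2
      ≤ ((n:ℝ)-2) * ∑ i, ∑ j, (h i - h j)^2*(s₂ - (h i)^2 - (h j)^2) := by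
    calc ∑ i, ∑ j, ((h i - h j)*(h i + h j - s₁))^2
        ≤ ∑ i, ∑ j, ((n:ℝ)-2)*((h i - h j)^2*(s₂ - (h i)^2 - (h j)^2)) :=
          Finset.sum_le_sum fun i _ => Finset.sum_le_sum fun j _ => hCS i j
      _ = ((n:ℝ)-2) * ∑ i, ∑ j, (h i - h j)^2*(s₂ - (h i)^2 - (h j)^2) := by
          simp_rw [← Finset.mul_sum]
  -- e5 : Sp = s₂ R - Q
  have e5 : ∑ i, ∑ j, (h i - h j)^2*(s₂ - (h i)^2 - (h j)^2)
      = s₂ * (∑ i, ∑ j, (h i - h j)^2) - ∑ i, ∑ j, (h i - h j)^2*((h i)^2+(h j)^2) := by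
    have : ∀ i j : Fin n, (h i - h j)^2*(s₂ - (h i)^2 - (h j)^2)
        = s₂*(h i - h j)^2 - (h i - h j)^2*((h i)^2+(h j)^2) := fun i j => by ring
    rw [Finset.sum_congr rfl fun i _ => Finset.sum_congr rfl fun j _ => this i j]
    simp_rw [Finset.sum_sub_distrib, ← Finset.mul_sum]
  -- e7 : key2
  have S2id : ∑ i, ∑ j, (h i - h j)^2*(((n:ℝ)-1)*((h i)^2+(h j)^2) - s₂)
      = ((n:ℝ)-1) * (∑ i, ∑ j, (h i - h j)^2*((h i)^2+(h j)^2))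
        - s₂ * ∑ i, ∑ j, (h i - h j)^2 := by
    have : ∀ i j : Fin n, (h i - h j)^2*(((n:ℝ)-1)*((h i)^2+(h j)^2) - s₂)
        = ((n:ℝ)-1)*((h i - h j)^2*((h i)^2+(h j)^2)) - s₂*(h i - h j)^2 := fun i j => by ring
    rw [Finset.sum_congr rfl fun i _ => Finset.sum_congr rfl fun j _ => this i j]
    simp_rw [Finset.sum_sub_distrib, ← Finset.mul_sum]
  have e7 : 0 ≤ ((n:ℝ)-1) * (∑ i, ∑ j, (h i - h j)^2*((h i)^2+(h j)^2))
      - s₂ * ∑ i, ∑ j, (h i - h j)^2 := by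
    have hk := key2 n hn h
    rw [← hs₂] at hk
    rw [S2id] at hk
    exact hk
  -- scalar endgame
  have c1 : ((n:ℝ)-2) * (∑ i, ∑ j, (β i - β j)^2)
      ≤ ∑ i, ∑ j, (h i - h j)^2*(s₂ - (h i)^2 - (h j)^2) := by
    have h1 : ((n:ℝ)-2)^2 * (∑ i, ∑ j, (β i - β j)^2)
        ≤ ((n:ℝ)-2) * ∑ i, ∑ j, (h i - h j)^2*(s₂ - (h i)^2 - (h j)^2) := e3 ▸ e6
    have h1' : ((n:ℝ)-2) * (((n:ℝ)-2) * (∑ i, ∑ j, (β i - β j)^2))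
        ≤ ((n:ℝ)-2) * ∑ i, ∑ j, (h i - h j)^2*(s₂ - (h i)^2 - (h j)^2) := by linarith
    exact le_of_mul_le_mul_left h1' hn2
  have c3 : ((n:ℝ)-1) * (∑ i, ∑ j, (h i - h j)^2*(s₂ - (h i)^2 - (h j)^2))
      ≤ ((n:ℝ)-2) * (s₂ * ∑ i, ∑ j, (h i - h j)^2) := by
    have e5'' : ((n:ℝ)-1) * (∑ i, ∑ j, (h i - h j)^2*(s₂ - (h i)^2 - (h j)^2))
        = ((n:ℝ)-1) * (s₂ * (∑ i, ∑ j, (h i - h j)^2)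
          - ∑ i, ∑ j, (h i - h j)^2*((h i)^2+(h j)^2)) := by rw [e5]
    nlinarith [e7, e5'']
  have c2 : ((n:ℝ)-1) * (((n:ℝ)-2) * (∑ i, ∑ j, (β i - β j)^2))
      ≤ ((n:ℝ)-1) * (∑ i, ∑ j, (h i - h j)^2*(s₂ - (h i)^2 - (h j)^2)) :=
    mul_le_mul_of_nonneg_left c1 (le_of_lt hn1)
  have c4 : ((n:ℝ)-2) * (((n:ℝ)-1) * (∑ i, ∑ j, (β i - β j)^2))
      ≤ ((n:ℝ)-2) * (s₂ * ∑ i, ∑ j, (h i - h j)^2) := by nlinarith [c2, c3]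
  have k3 : ((n:ℝ)-1) * (∑ i, ∑ j, (β i - β j)^2) ≤ s₂ * ∑ i, ∑ j, (h i - h j)^2 :=
    le_of_mul_le_mul_left c4 hn2
  have fin' : 2*((n:ℝ)-1)*(s₂^2 + 2*s₂*(∑ i, β i)) = s₂ * ∑ i, ∑ j, (h i - h j)^2 := by
    linear_combination 2*s₂*e1 - s₂*e4
  have key : 2*((n:ℝ)-1)*((s₂ + ∑ i, β i)^2 - (n:ℝ)*(∑ i, (β i)^2))
      = s₂ * (∑ i, ∑ j, (h i - h j)^2) - ((n:ℝ)-1) * (∑ i, ∑ j, (β i - β j)^2) := by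
    linear_combination fin' + ((n:ℝ)-1)*e2
  nlinarith [key, k3, hn1]
end

section
/- Let n ≥ 4, 2 ≤ k ≤ n−2, and define φ_k(t) as the value of the symmetric degree-4 polynomial f(h₁,…,hₙ) = (s₂+α₀ᵀβ)² − nβᵀβ at h₁ = … = h_k = t, h_{k+1} = … = hₙ = 1. Then φ_k(t) = [k(n−k)(t−1)²/((n−1)(n−2)²)](a₁t² + b₁t + c₁) with a₁ = ((n−1)k−1)(n−1−k), b₁ = −2(k−1)(n−1−k)(n−1), c₁ = (k−1)((n−k)(n−1)−1), and φ_k(t) ≥ 0 for all t ∈ ℝ. -/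
lemma sum_range_ite' (n k : ℕ) (hk : k ≤ n) (a b : ℝ) :
    ∑ i ∈ Finset.range n, (if i < k then a else b) = k * a + ((n:ℝ) - k) * b := by
  have h1 : Finset.range n = Finset.range k ∪ Finset.Ico k n := by
    rw [Finset.range_eq_Ico, Finset.range_eq_Ico,
      Finset.Ico_union_Ico_eq_Ico (Nat.zero_le k) hk]
  rw [h1, Finset.sum_union (by
    rw [Finset.range_eq_Ico]; exact Finset.Ico_disjoint_Ico_consecutive 0 k n)]
  rw [Finset.sum_congr rfl (fun i hi => if_pos (Finset.mem_range.mp hi)),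
      Finset.sum_congr rfl (fun i hi => if_neg (by
        exact Nat.not_lt.mpr (Finset.mem_Ico.mp hi).1))]
  rw [Finset.sum_const, Finset.sum_const, Finset.card_range, Nat.card_Ico]
  rw [nsmul_eq_mul, nsmul_eq_mul, Nat.cast_sub hk]

lemma fin_sum_ite' (n k : ℕ) (hk : k ≤ n) (a b : ℝ) :
    ∑ i : Fin n, (if (i:ℕ) < k then a else b) = k * a + ((n:ℝ) - k) * b := by
  rw [Fin.sum_univ_eq_sum_range (fun j => if j < k then a else b)]
  exact sum_range_ite' n k hk a b

set_option maxHeartbeats 2000000 in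
/-- The reduction `φ_k(t)` of `f = (s₂+α₀ᵀβ)² − nβᵀβ` factors as stated and is nonnegative. -/
theorem stmt_7 (n k : ℕ) (hn : 4 ≤ n) (hk2 : 2 ≤ k) (hk : k ≤ n - 2) (t : ℝ)
    (h : Fin n → ℝ) (hhdef : ∀ i : Fin n, h i = if (i : ℕ) < k then t else 1)
    (s₁ s₂ : ℝ) (hs₁ : s₁ = ∑ i, h i) (hs₂ : s₂ = ∑ i, (h i) ^ 2)
    (β : Fin n → ℝ)
    (hβ : ∀ i, β i = (s₁ ^ 2 - s₂) / (2 * ((n : ℝ) - 1) * ((n : ℝ) - 2))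
        - s₁ * h i / ((n : ℝ) - 2) + (h i) ^ 2 / ((n : ℝ) - 2))
    (φ : ℝ) (hφ : φ = (s₂ + ∑ i, β i) ^ 2 - (n : ℝ) * ∑ i, (β i) ^ 2)
    (a₁ b₁ c₁ : ℝ)
    (ha : a₁ = (((n : ℝ) - 1) * (k : ℝ) - 1) * ((n : ℝ) - 1 - (k : ℝ)))
    (hb : b₁ = -2 * ((k : ℝ) - 1) * ((n : ℝ) - 1 - (k : ℝ)) * ((n : ℝ) - 1))
    (hc : c₁ = ((k : ℝ) - 1) * (((n : ℝ) - (k : ℝ)) * ((n : ℝ) - 1) - 1)) :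
    φ = (k : ℝ) * ((n : ℝ) - (k : ℝ)) * (t - 1) ^ 2 /
          (((n : ℝ) - 1) * ((n : ℝ) - 2) ^ 2) * (a₁ * t ^ 2 + b₁ * t + c₁)
    ∧ 0 ≤ φ := by
  have hkn : k ≤ n := le_trans hk (Nat.sub_le n 2)
  set N : ℝ := (n : ℝ) with hN
  set K : ℝ := (k : ℝ) with hK
  have hN4 : (4:ℝ) ≤ N := by rw [hN]; exact_mod_cast hn
  have hK2' : (2:ℝ) ≤ K := by rw [hK]; exact_mod_cast hk2
  have hKN : K ≤ N - 2 := by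
    have h2n : 2 ≤ n := by omega
    have := (Nat.cast_le (α := ℝ)).mpr hk
    rwa [Nat.cast_sub h2n] at this
  have hN1 : N - 1 ≠ 0 := by nlinarith
  have hN2 : N - 2 ≠ 0 := by nlinarith
  -- closed forms for the sums
  have hs₁' : s₁ = K * t + (N - K) := by
    rw [hs₁]
    rw [Finset.sum_congr rfl (fun i _ => hhdef i)]
    exact fin_sum_ite' n k hkn t 1 |>.trans (by ring)
  have hs₂' : s₂ = K * t ^ 2 + (N - K) := by
    rw [hs₂]
    have : ∀ i : Fin n, (h i) ^ 2 = if (i:ℕ) < k then t ^ 2 else 1 := by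
      intro i; rw [hhdef i]; split_ifs <;> norm_num
    rw [Finset.sum_congr rfl (fun i _ => this i)]
    exact fin_sum_ite' n k hkn (t^2) 1 |>.trans (by ring)
  set A : ℝ := (s₁ ^ 2 - s₂) / (2 * (N - 1) * (N - 2)) with hA
  set Bt : ℝ := A - s₁ * t / (N - 2) + t ^ 2 / (N - 2) with hBt
  set B1 : ℝ := A - s₁ * 1 / (N - 2) + 1 ^ 2 / (N - 2) with hB1
  have hβ' : ∀ i : Fin n, β i = if (i:ℕ) < k then Bt else B1 := by
    intro i; rw [hβ i, hhdef i]; split_ifs <;> simp [hBt, hB1]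
  have hsum : ∑ i, β i = K * Bt + (N - K) * B1 := by
    rw [Finset.sum_congr rfl (fun i _ => hβ' i)]
    exact fin_sum_ite' n k hkn Bt B1
  have hsumsq : ∑ i, (β i) ^ 2 = K * Bt ^ 2 + (N - K) * B1 ^ 2 := by
    have : ∀ i : Fin n, (β i) ^ 2 = if (i:ℕ) < k then Bt ^ 2 else B1 ^ 2 := by
      intro i; rw [hβ' i]; split_ifs <;> rfl
    rw [Finset.sum_congr rfl (fun i _ => this i)]
    exact fin_sum_ite' n k hkn (Bt^2) (B1^2)
  have hφ' : φ = K * (N - K) * (t - 1) ^ 2 /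
      ((N - 1) * (N - 2) ^ 2) * (a₁ * t ^ 2 + b₁ * t + c₁) := by
    rw [hφ, hsum, hsumsq, hBt, hB1, hA, hs₁', hs₂', ha, hb, hc]
    field_simp
    ring
  refine ⟨hφ', ?_⟩
  rw [hφ']
  have hd : 4 * a₁ * c₁ - b₁ ^ 2 = 4 * (K - 1) * (N - 1 - K) * (N - 2) ^ 2 * N := by
    rw [ha, hb, hc]; ring
  have hdnn : 0 ≤ 4 * a₁ * c₁ - b₁ ^ 2 := by
    rw [hd]
    have h1 : (0:ℝ) ≤ K - 1 := by linarith
    have h2 : (0:ℝ) ≤ N - 1 - K := by linarith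
    positivity
  have ha₁ : 0 < a₁ := by
    rw [ha]
    have h1 : (0:ℝ) ≤ (N - 4) * (K - 2) := by
      apply mul_nonneg <;> linarith
    have h2 : (0:ℝ) < (N - 1) * K - 1 := by nlinarith
    have h3 : (0:ℝ) < N - 1 - K := by linarith
    positivity
  have hq : 0 ≤ a₁ * t ^ 2 + b₁ * t + c₁ := by
    nlinarith [sq_nonneg (2 * a₁ * t + b₁), ha₁, hdnn]
  apply mul_nonneg _ hq
  apply div_nonneg
  · exact mul_nonneg (mul_nonneg (by linarith) (by linarith)) (sq_nonneg _)
  · nlinarith [sq_nonneg (N - 2)]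
end

section
/- Let n ≥ 2, s₂ ≥ 0, α₀ = (1,…,1)ᵀ ∈ ℝⁿ, and β ∈ ℝⁿ. Suppose s₂ + α₀ᵀβ ≥ 0 and (s₂ + α₀ᵀβ)² − nβᵀβ ≥ 0. Then the symmetric matrix B = s₂Iₙ + α₀βᵀ + βα₀ᵀ is positive semidefinite; i.e., γᵀBγ ≥ 0 for all γ ∈ ℝⁿ. -/
open Matrix

/-- Positive semidefiniteness of `B = s₂Iₙ + α₀βᵀ + βα₀ᵀ` under the eigenvalue conditions. -/
theorem stmt_10 (n : ℕ) (hn : 2 ≤ n) (s₂ : ℝ) (hs₂ : 0 ≤ s₂)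
    (β : Fin n → ℝ)
    (α₀ : Fin n → ℝ) (hα₀ : α₀ = fun _ => 1)
    (h₁ : 0 ≤ s₂ + ∑ i, β i)
    (h₂ : 0 ≤ (s₂ + ∑ i, β i) ^ 2 - (n : ℝ) * ∑ i, (β i) ^ 2)
    (B : Matrix (Fin n) (Fin n) ℝ)
    (hB : B = s₂ • (1 : Matrix (Fin n) (Fin n) ℝ)
        + Matrix.vecMulVec α₀ β + Matrix.vecMulVec β α₀) :
    ∀ γ : Fin n → ℝ, 0 ≤ γ ⬝ᵥ (B.mulVec γ) := by
  subst hα₀ hB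
  intro γ
  -- Step 1: compute the quadratic form
  have hform : γ ⬝ᵥ ((s₂ • (1 : Matrix (Fin n) (Fin n) ℝ)
        + Matrix.vecMulVec (fun _ => 1) β + Matrix.vecMulVec β (fun _ => 1)).mulVec γ)
      = s₂ * ∑ i, (γ i)^2 + 2 * (∑ i, γ i) * (∑ i, β i * γ i) := by
    have h1 : (vecMulVec (fun _ : Fin n => (1:ℝ)) β).mulVec γ
        = fun _ : Fin n => ∑ j, β j * γ j := by
      ext i; simp [mulVec, vecMulVec_apply, dotProduct]
    have h2 : (vecMulVec β (fun _ => (1:ℝ))).mulVec γ = fun i => β i * ∑ j, γ j := by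
      ext i; simp [mulVec, vecMulVec_apply, dotProduct, Finset.mul_sum]
    have h3 : (s₂ • (1 : Matrix (Fin n) (Fin n) ℝ)).mulVec γ = s₂ • γ := by
      rw [smul_mulVec, one_mulVec]
    simp only [add_mulVec, h1, h2, h3, dotProduct, Pi.add_apply, Pi.smul_apply, smul_eq_mul]
    have e : ∀ i, γ i * (s₂ * γ i + (∑ j, β j * γ j) + β i * ∑ j, γ j)
        = s₂ * (γ i)^2 + γ i * (∑ j, β j * γ j) + (∑ j, γ j) * (β i * γ i) := fun i => by ring
    rw [Finset.sum_congr rfl fun i _ => e i]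
    rw [Finset.sum_add_distrib, Finset.sum_add_distrib, ← Finset.mul_sum, ← Finset.mul_sum,
      ← Finset.sum_mul]
    ring
  rw [hform]
  -- Step 2: the real inequality
  set b := ∑ i, β i with hb
  set S := ∑ i, γ i with hS
  set T := ∑ i, β i * γ i with hT
  set q := ∑ i, (β i)^2 with hq
  set P := ∑ i, (γ i)^2 with hP
  have hn0 : (0:ℝ) < (n:ℝ) := by positivity
  have hone : ∑ _i : Fin n, (1:ℝ) = (n:ℝ) := by simp
  have hCS1 : S^2 ≤ (n:ℝ) * P := by
    have := Finset.sum_mul_sq_le_sq_mul_sq Finset.univ (fun _ : Fin n => (1:ℝ)) γ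
    simpa [hone, hS, hP] using this
  have hCS2 : b^2 ≤ (n:ℝ) * q := by
    have := Finset.sum_mul_sq_le_sq_mul_sq Finset.univ (fun _ : Fin n => (1:ℝ)) β
    simpa [hone, hb, hq] using this
  have hCS3 : ((n:ℝ)*T - b*S)^2 ≤ ((n:ℝ)*q - b^2) * ((n:ℝ)*P - S^2) := by
    have key := Finset.sum_mul_sq_le_sq_mul_sq Finset.univ
      (fun i => (n:ℝ)*β i - b) (fun i => (n:ℝ)*γ i - S)
    have e1 : ∑ i, ((n:ℝ)*β i - b)*((n:ℝ)*γ i - S) = (n:ℝ)*((n:ℝ)*T - b*S) := by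
      have e : ∀ i : Fin n, ((n:ℝ)*β i - b)*((n:ℝ)*γ i - S)
          = (n:ℝ)^2*(β i * γ i) - ((n:ℝ)*S)*β i - ((n:ℝ)*b)*γ i + b*S*1 := fun i => by ring
      rw [Finset.sum_congr rfl fun i _ => e i]
      simp only [Finset.sum_add_distrib, Finset.sum_sub_distrib, ← Finset.mul_sum, hone]
      rw [← hT, ← hb, ← hS]; ring
    have e2 : ∑ i, ((n:ℝ)*β i - b)^2 = (n:ℝ)*((n:ℝ)*q - b^2) := by
      have e : ∀ i : Fin n, ((n:ℝ)*β i - b)^2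
          = (n:ℝ)^2*(β i)^2 - (2*(n:ℝ)*b)*β i + b^2*1 := fun i => by ring
      rw [Finset.sum_congr rfl fun i _ => e i]
      simp only [Finset.sum_add_distrib, Finset.sum_sub_distrib, ← Finset.mul_sum, hone]
      rw [← hq, ← hb]; ring
    have e3 : ∑ i, ((n:ℝ)*γ i - S)^2 = (n:ℝ)*((n:ℝ)*P - S^2) := by
      have e : ∀ i : Fin n, ((n:ℝ)*γ i - S)^2
          = (n:ℝ)^2*(γ i)^2 - (2*(n:ℝ)*S)*γ i + S^2*1 := fun i => by ring
      rw [Finset.sum_congr rfl fun i _ => e i]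
      simp only [Finset.sum_add_distrib, Finset.sum_sub_distrib, ← Finset.mul_sum, hone]
      rw [← hP, ← hS]; ring
    rw [e1, e2, e3] at key
    have hn2 : (0:ℝ) < (n:ℝ)^2 := by positivity
    refine le_of_mul_le_mul_left ?_ hn2
    calc (n:ℝ)^2 * ((n:ℝ)*T - b*S)^2 = ((n:ℝ)*((n:ℝ)*T - b*S))^2 := by ring
      _ ≤ (n:ℝ)*((n:ℝ)*q - b^2) * ((n:ℝ)*((n:ℝ)*P - S^2)) := key
      _ = (n:ℝ)^2 * (((n:ℝ)*q - b^2) * ((n:ℝ)*P - S^2)) := by ring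
  clear_value b S T q P
  clear hb hS hT hq hP
  have h3 : (n:ℝ)*q - b^2 ≤ s₂*(s₂ + 2*b) := by nlinarith
  rcases eq_or_lt_of_le hs₂ with hz | hpos
  · -- s₂ = 0
    subst hz
    have hq0 : (n:ℝ)*q - b^2 = 0 := by nlinarith
    have hX : ((n:ℝ)*T - b*S)^2 ≤ 0 := by nlinarith
    have hX0 : (n:ℝ)*T - b*S = 0 := by
      have h9 : ((n:ℝ)*T - b*S)^2 = 0 := le_antisymm hX (sq_nonneg _)
      exact sq_eq_zero_iff.mp h9
    have hb0 : (0:ℝ) ≤ b := by linarith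
    have h5 : (n:ℝ)*(2*S*T) = 2*b*S^2 := by linear_combination 2*S*hX0
    nlinarith [mul_nonneg hb0 (sq_nonneg S)]
  · have h2b : 0 ≤ s₂ + 2*b := by
      by_contra hc
      push_neg at hc
      have := mul_neg_of_pos_of_neg hpos hc
      linarith
    have hu0 : 0 ≤ (n:ℝ)*P - S^2 := by linarith
    have hv0 : (0:ℝ) ≤ S^2 := sq_nonneg S
    have h4S : (0:ℝ) ≤ 4*S^2 := by positivity
    have h6 : (2*S*((n:ℝ)*T - b*S))^2 ≤ 4*S^2*(((n:ℝ)*q - b^2)*((n:ℝ)*P - S^2)) := by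
      calc (2*S*((n:ℝ)*T - b*S))^2 = 4*S^2*(((n:ℝ)*T - b*S)^2) := by ring
        _ ≤ 4*S^2*(((n:ℝ)*q - b^2)*((n:ℝ)*P - S^2)) := mul_le_mul_of_nonneg_left hCS3 h4S
    have h7 : 4*S^2*(((n:ℝ)*q - b^2)*((n:ℝ)*P - S^2))
        ≤ 4*S^2*(s₂*(s₂+2*b)*((n:ℝ)*P - S^2)) := by
      exact mul_le_mul_of_nonneg_left (mul_le_mul_of_nonneg_right h3 hu0) h4S
    have h8 : 4*S^2*(s₂*(s₂+2*b)*((n:ℝ)*P - S^2))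
        ≤ (s₂*((n:ℝ)*P - S^2) + (s₂+2*b)*S^2)^2 := by
      nlinarith [sq_nonneg (s₂*((n:ℝ)*P - S^2) - (s₂+2*b)*S^2)]
    have hXsq : (2*S*((n:ℝ)*T - b*S))^2 ≤ (s₂*((n:ℝ)*P - S^2) + (s₂+2*b)*S^2)^2 := by
      linarith
    have hX0 : 0 ≤ s₂*((n:ℝ)*P - S^2) + (s₂+2*b)*S^2 :=
      add_nonneg (mul_nonneg hpos.le hu0) (mul_nonneg h2b hv0)
    have hXY : 0 ≤ s₂*((n:ℝ)*P - S^2) + (s₂+2*b)*S^2 + 2*S*((n:ℝ)*T - b*S) := by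
      nlinarith [hXsq, hX0]
    have heq : (n:ℝ)*(s₂*P + 2*S*T)
        = s₂*((n:ℝ)*P - S^2) + (s₂+2*b)*S^2 + 2*S*((n:ℝ)*T - b*S) := by ring
    have hfin : (n:ℝ) * 0 ≤ (n:ℝ) * (s₂*P + 2*S*T) := by
      rw [mul_zero, heq]; exact hXY
    exact le_of_mul_le_mul_left hfin hn0
end
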